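/- For a fixed admissible cavity ε (not identically equal to ε_∞ in the trivial sense), the function F(z;ε) is not identically zero, and hence the set of QN eigenvalues of ε is a discrete subset of ℂ (isolated points with no finite accumulation point). -/

import Mathlib

set_option maxHeartbeats 1600000

open Set MeasureTheory Topology Filter

noncomputable section

/-- Picard iterates for the cavity ODE: `qnPhi ε 0 s = s`,
`qnPhi ε (n+1) s = ∫_0^s ∫_0^t ε(u) qnPhi ε n u du dt`. -/
def qnPhi (ε : ℝ → ℝ) : ℕ → ℝ → ℂ
  | 0 => fun s => (s : ℂ)
  | (n+1) => fun s => ∫ t in (0:ℝ)..s, ∫ u in (0:ℝ)..t, (ε u : ℂ) * qnPhi ε n u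

/-- Derivatives of the Picard iterates. -/
def qnChi (ε : ℝ → ℝ) : ℕ → ℝ → ℂ
  | 0 => fun _ => 1
  | (n+1) => fun s => ∫ u in (0:ℝ)..s, (ε u : ℂ) * qnPhi ε n u

lemma qn_II {ε : ℝ → ℝ} {B : ℝ} (hmeas : Measurable ε) (hb : ∀ s, |ε s| ≤ B)
    {f : ℝ → ℂ} (hf : Continuous f) (a b : ℝ) :
    IntervalIntegrable (fun u => (ε u : ℂ) * f u) volume a b := by
  obtain ⟨C, hC⟩ := (isCompact_uIcc (a := a) (b := b)).exists_bound_of_continuousOn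
    hf.continuousOn
  rw [intervalIntegrable_iff]
  refine Integrable.mono' (g := fun _ => B * C) (integrableOn_const measure_Ioc_lt_top.ne)
    (((Complex.measurable_ofReal.comp hmeas).mul hf.measurable).aestronglyMeasurable)
    (((ae_restrict_iff' measurableSet_uIoc).2 (Filter.Eventually.of_forall fun u hu => ?_)))
  have h1 : ‖(ε u : ℂ)‖ ≤ B := by simpa using hb u
  have h2 : ‖f u‖ ≤ C := hC u (uIoc_subset_uIcc hu)
  calc ‖(ε u : ℂ) * f u‖ = ‖(ε u : ℂ)‖ * ‖f u‖ := norm_mul _ _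
    _ ≤ B * C := mul_le_mul h1 h2 (norm_nonneg _) ((abs_nonneg _).trans (hb u))

lemma qnPhi_cont {ε : ℝ → ℝ} {B : ℝ} (hmeas : Measurable ε) (hb : ∀ s, |ε s| ≤ B) :
    ∀ n, Continuous (qnPhi ε n) := by
  intro n
  induction n with
  | zero => exact Complex.continuous_ofReal
  | succ n ih =>
      have hinner : Continuous fun t => ∫ u in (0:ℝ)..t, (ε u : ℂ) * qnPhi ε n u :=
        intervalIntegral.continuous_primitive (fun a b => qn_II hmeas hb ih a b) 0
      exact intervalIntegral.continuous_primitive (fun a b => hinner.intervalIntegrable a b) 0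

lemma qnChi_cont {ε : ℝ → ℝ} {B : ℝ} (hmeas : Measurable ε) (hb : ∀ s, |ε s| ≤ B) :
    ∀ n, Continuous (qnChi ε n) := by
  intro n
  cases n with
  | zero => exact continuous_const
  | succ n =>
      exact intervalIntegral.continuous_primitive
        (fun a b => qn_II hmeas hb (qnPhi_cont hmeas hb n) a b) 0

lemma qnPhi_eq_int (ε : ℝ → ℝ) (n : ℕ) (s : ℝ) :
    qnPhi ε n s = ∫ t in (0:ℝ)..s, qnChi ε n t := by
  cases n with
  | zero => simp [qnPhi, qnChi]
  | succ n => rfl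

/-- Standard estimate of the norm of an integral by a monomial bound. -/
lemma qn_norm_int_le {f : ℝ → ℂ} {s C : ℝ} {m : ℕ} (hs : 0 ≤ s) (hC : 0 ≤ C)
    (hb : ∀ u ∈ Set.Ioc (0:ℝ) s, ‖f u‖ ≤ C * u ^ m) :
    ‖∫ u in (0:ℝ)..s, f u‖ ≤ C * s ^ (m+1) / (m+1) := by
  have hint : IntervalIntegrable (fun u => C * u ^ m) volume 0 s :=
    (continuous_const.mul (continuous_pow m)).intervalIntegrable _ _
  have hae : ∀ᵐ t ∂(volume.restrict (Set.uIoc (0:ℝ) s)), ‖f t‖ ≤ C * t ^ m := by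
    rw [Set.uIoc_of_le hs]
    exact (ae_restrict_iff' measurableSet_Ioc).2 (Filter.Eventually.of_forall hb)
  have h := intervalIntegral.norm_integral_le_abs_of_norm_le hae hint
  have hcomp : ∫ u in (0:ℝ)..s, C * u ^ m = C * s ^ (m+1) / (m+1) := by
    rw [intervalIntegral.integral_const_mul, integral_pow]
    ring
  rw [hcomp] at h
  refine h.trans (le_of_eq (abs_of_nonneg ?_))
  positivity

lemma qn_fact_cast (m : ℕ) : ((m+1).factorial : ℝ) = (m+1) * m.factorial := by
  exact_mod_cast congrArg (Nat.cast : ℕ → ℝ) (Nat.factorial_succ m)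

lemma qn_bound {ε : ℝ → ℝ} {B : ℝ} (hmeas : Measurable ε) (hb : ∀ s, |ε s| ≤ B)
    (hB : 0 ≤ B) :
    ∀ n, ∀ s, 0 ≤ s →
      ‖qnPhi ε n s‖ ≤ B ^ n * s ^ (2*n+1) / (2*n+1).factorial ∧
      ‖qnChi ε n s‖ ≤ B ^ n * s ^ (2*n) / (2*n).factorial := by
  intro n
  induction n with
  | zero =>
      intro s hs
      constructor
      · simpa [qnPhi] using le_of_eq (abs_of_nonneg hs)
      · simp [qnChi]
  | succ n ih =>
      intro s hs
      have hfp : (0:ℝ) < (2*n+1).factorial := by exact_mod_cast (2*n+1).factorial_pos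
      have hfp2 : (0:ℝ) < (2*n+2).factorial := by exact_mod_cast (2*n+2).factorial_pos
      have hCnn : 0 ≤ B * (B ^ n / (2*n+1).factorial) := by positivity
      -- bound for chi (n+1) at any 0 ≤ t
      have hchi : ∀ t, 0 ≤ t →
          ‖qnChi ε (n+1) t‖ ≤ B ^ (n+1) * t ^ (2*(n+1)) / (2*(n+1)).factorial := by
        intro t ht
        have h := qn_norm_int_le (f := fun u => (ε u : ℂ) * qnPhi ε n u)
          (C := B * (B ^ n / (2*n+1).factorial)) (m := 2*n+1) ht hCnn ?_
        · have : qnChi ε (n+1) t = ∫ u in (0:ℝ)..t, (ε u : ℂ) * qnPhi ε n u := rfl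
          rw [this]
          refine h.trans (le_of_eq ?_)
          have hee : 2*(n+1) = 2*n+1+1 := by ring
          rw [hee, qn_fact_cast (2*n+1)]
          field_simp
          ring
        · intro u hu
          have h1 : ‖(ε u : ℂ)‖ ≤ B := by simpa using hb u
          have h2 := (ih u hu.1.le).1
          calc ‖(ε u : ℂ) * qnPhi ε n u‖ = ‖(ε u : ℂ)‖ * ‖qnPhi ε n u‖ := norm_mul _ _
            _ ≤ B * (B ^ n * u ^ (2*n+1) / (2*n+1).factorial) :=
                mul_le_mul h1 h2 (norm_nonneg _) hB
            _ = B * (B ^ n / (2*n+1).factorial) * u ^ (2*n+1) := by ring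
      refine ⟨?_, hchi s hs⟩
      -- bound for phi (n+1)
      have hC2 : (0:ℝ) ≤ B ^ (n+1) / (2*(n+1)).factorial := by positivity
      have h := qn_norm_int_le (f := fun t => qnChi ε (n+1) t)
        (C := B ^ (n+1) / (2*(n+1)).factorial) (m := 2*(n+1)) hs hC2 ?_
      · rw [qnPhi_eq_int]
        refine h.trans (le_of_eq ?_)
        rw [qn_fact_cast (2*(n+1))]
        field_simp
      · intro t ht
        refine (hchi t ht.1.le).trans (le_of_eq ?_)
        ring

open Filter in
/-- From a coefficient bound `‖g n‖ ≤ C·Dⁿ/n!` we get an entire function which is the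
sum of the power series with coefficients `g`. -/
lemma qn_series (g : ℕ → ℂ) (C D : ℝ) (hg : ∀ n, ‖g n‖ ≤ C * D ^ n / n.factorial) :
    ∃ G : ℂ → ℂ, (∀ w, AnalyticAt ℂ G w) ∧
      (∀ w, Tendsto (fun N => ∑ n ∈ Finset.range N, g n * w ^ n) atTop (𝓝 (G w))) ∧
      G 0 = g 0 := by
  set p := FormalMultilinearSeries.ofScalars ℂ g with hp
  have hsum : ∀ r : ℝ, 0 ≤ r → Summable (fun n => ‖g n‖ * r ^ n) := by
    intro r hr
    refine Summable.of_nonneg_of_le (fun n => by positivity) (fun n => ?_)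
      ((Real.summable_pow_div_factorial (D * r)).mul_left C)
    calc ‖g n‖ * r ^ n ≤ (C * D ^ n / n.factorial) * r ^ n :=
          mul_le_mul_of_nonneg_right (hg n) (by positivity)
      _ = C * ((D * r) ^ n / n.factorial) := by rw [mul_pow]; ring
  have hnorm : ∀ n, ‖p n‖ = ‖g n‖ := fun n => FormalMultilinearSeries.ofScalars_norm ℂ g n
  have hrad : p.radius = ⊤ := by
    refine p.radius_eq_top_of_summable_norm (fun r => ?_)
    simpa [hnorm] using hsum r r.coe_nonneg
  have hball : HasFPowerSeriesOnBall p.sum p 0 ⊤ :=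
    hrad ▸ p.hasFPowerSeriesOnBall (by rw [hrad]; exact ENNReal.zero_lt_top)
  have hsumval : ∀ w : ℂ, p.sum w = ∑' n, g n * w ^ n := by
    intro w
    rw [show p.sum = FormalMultilinearSeries.ofScalarsSum g from rfl,
      FormalMultilinearSeries.ofScalars_sum_eq]
    simp [smul_eq_mul]
  refine ⟨p.sum, fun w => hball.analyticAt_of_mem (EMetric.mem_ball.mpr (edist_lt_top _ _)),
    ?_, ?_⟩
  · intro w
    have hs : Summable (fun n => g n * w ^ n) := by
      refine Summable.of_norm ?_
      simpa [norm_mul, norm_pow] using hsum ‖w‖ (norm_nonneg w)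
    rw [hsumval w]
    exact hs.hasSum.tendsto_sum_nat
  · rw [hsumval 0, tsum_eq_single 0 (fun n hn => by simp [zero_pow hn])]
    simp

end

open Set MeasureTheory Topology Filter

/-- `F(·;ε)` is not identically zero (indeed `F(0) ≠ 0`), hence the set of QN
eigenvalues of `ε` (zeros of `F`) consists of isolated points. -/
theorem QN_eigenvalues_discrete
    (l c ε₁ ε₂ εoo : ℝ) (hl : 0 < l) (hc : 0 < c)
    (hε₁ : 1 ≤ ε₁) (h12 : ε₁ < ε₂) (hεoo : 1 ≤ εoo)
    (ε : ℝ → ℝ) (hmeas : Measurable ε) (hεb : ∀ s, ε₁ ≤ ε s ∧ ε s ≤ ε₂)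
    (Ψ Ψs : ℂ → ℝ → ℂ)
    (hd1 : ∀ z, ∀ s ∈ Icc (0 : ℝ) l, HasDerivAt (Ψ z) (Ψs z s) s)
    (hd2 : ∀ z, ∀ s ∈ Icc (0 : ℝ) l,
      HasDerivAt (Ψs z) (-(z ^ 2 / (c : ℂ) ^ 2) * (ε s : ℂ) * Ψ z s) s)
    (h0 : ∀ z, Ψ z 0 = 0) (h1 : ∀ z, Ψs z 0 = 1)
    (F : ℂ → ℂ)
    (hF : ∀ z, F z = Complex.I * z * ((Real.sqrt εoo / c : ℝ) : ℂ) * Ψ z l - Ψs z l) :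
    (∃ z, F z ≠ 0) ∧
    ∀ ω : ℂ, F ω = 0 → ∃ δ > 0, ∀ w : ℂ, F w = 0 → ‖w - ω‖ < δ → w = ω := by
  classical
  have hB : ∀ s, |ε s| ≤ ε₂ := fun s => by
    have h := hεb s
    rw [abs_of_nonneg (by linarith [h.1])]
    exact h.2
  have hε₂0 : (0:ℝ) ≤ ε₂ := by linarith [(hεb 0).1]
  have h0Icc : (0:ℝ) ∈ Icc (0:ℝ) l := ⟨le_refl 0, hl.le⟩
  have hfacpos : ∀ m : ℕ, (0:ℝ) < m.factorial := fun m => by exact_mod_cast m.factorial_pos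
  -- coefficient sequences
  set a : ℕ → ℂ := fun n => (-1/(c:ℂ)^2)^n * qnPhi ε n l with ha
  set b : ℕ → ℂ := fun n => (-1/(c:ℂ)^2)^n * qnChi ε n l with hbdef
  have hnormc : ‖(-1/(c:ℂ)^2)‖ = 1/c^2 := by
    rw [norm_div, norm_neg, norm_one]
    have hcc : ((c:ℂ)^2) = ((c^2 : ℝ) : ℂ) := by push_cast; ring
    rw [hcc, Complex.norm_real, Real.norm_eq_abs, abs_of_pos (by positivity)]
  -- uniform coefficient bounds
  have hub : ∀ n, ‖a n‖ ≤ ((1+l) * 1) * ((ε₂/c^2) * l^2)^n / n.factorial := by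
    intro n
    have h1 := (qn_bound hmeas hB hε₂0 n l hl.le).1
    have hXn : (0:ℝ) ≤ ((ε₂/c^2) * l^2)^n := by positivity
    calc ‖a n‖ = (1/c^2)^n * ‖qnPhi ε n l‖ := by
          simp only [ha]; rw [norm_mul, norm_pow, hnormc]
      _ ≤ (1/c^2)^n * (ε₂^n * l^(2*n+1) / (2*n+1).factorial) :=
          mul_le_mul_of_nonneg_left h1 (by positivity)
      _ = ((ε₂/c^2) * l^2)^n * l / (2*n+1).factorial := by
          rw [mul_pow, div_pow, div_pow, one_pow, ← pow_mul]
          rw [show l^(2*n+1) = l^(n*2) * l from by rw [pow_succ]; ring_nf]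
          ring
      _ ≤ ((1+l) * ((ε₂/c^2) * l^2)^n) / (2*n+1).factorial := by
          rw [div_le_div_iff_of_pos_right (hfacpos _)]
          nlinarith
      _ ≤ ((1+l) * 1) * ((ε₂/c^2) * l^2)^n / n.factorial := by
          rw [mul_one]
          refine div_le_div_of_nonneg_left (by positivity) (hfacpos _) ?_
          exact_mod_cast Nat.factorial_le (by omega)
  have hvb : ∀ n, ‖b n‖ ≤ ((1+l) * 1) * ((ε₂/c^2) * l^2)^n / n.factorial := by
    intro n
    have h1 := (qn_bound hmeas hB hε₂0 n l hl.le).2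
    have hXn : (0:ℝ) ≤ ((ε₂/c^2) * l^2)^n := by positivity
    calc ‖b n‖ = (1/c^2)^n * ‖qnChi ε n l‖ := by
          simp only [hbdef]; rw [norm_mul, norm_pow, hnormc]
      _ ≤ (1/c^2)^n * (ε₂^n * l^(2*n) / (2*n).factorial) :=
          mul_le_mul_of_nonneg_left h1 (by positivity)
      _ = ((ε₂/c^2) * l^2)^n / (2*n).factorial := by
          rw [mul_pow, div_pow, div_pow, one_pow, ← pow_mul]
          ring_nf
      _ ≤ ((1+l) * ((ε₂/c^2) * l^2)^n) / (2*n).factorial := by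
          rw [div_le_div_iff_of_pos_right (hfacpos _)]
          nlinarith
      _ ≤ ((1+l) * 1) * ((ε₂/c^2) * l^2)^n / n.factorial := by
          rw [mul_one]
          refine div_le_div_of_nonneg_left (by positivity) (hfacpos _) ?_
          exact_mod_cast Nat.factorial_le (by omega)
  obtain ⟨Ga, hGaA, hGaT, hGa0⟩ := qn_series a _ _ hub
  obtain ⟨Gb, hGbA, hGbT, hGb0⟩ := qn_series b _ _ hvb
  -- the key representation of `Ψ z l` and `Ψs z l`
  have hrep : ∀ z : ℂ, Ψ z l = Ga (z^2) ∧ Ψs z l = Gb (z^2) := by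
    intro z
    have hΨc : ContinuousOn (Ψ z) (Icc 0 l) := fun s hs =>
      ((hd1 z s hs).continuousAt).continuousWithinAt
    have hΨsc : ContinuousOn (Ψs z) (Icc 0 l) := fun s hs =>
      ((hd2 z s hs).continuousAt).continuousWithinAt
    have hsubI : ∀ s : ℝ, s ∈ Icc (0:ℝ) l → Ioc (0:ℝ) s ⊆ Icc (0:ℝ) l := by
      intro s hs u hu
      exact ⟨hu.1.le, hu.2.trans hs.2⟩
    have hsubU : ∀ s : ℝ, s ∈ Icc (0:ℝ) l → uIcc (0:ℝ) s ⊆ Icc (0:ℝ) l := by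
      intro s hs
      rw [uIcc_of_le hs.1]
      exact Icc_subset_Icc le_rfl hs.2
    -- interval integrability of ε·f for f continuous on [0,l]
    have II2 : ∀ f : ℝ → ℂ, ContinuousOn f (Icc 0 l) → ∀ s ∈ Icc (0:ℝ) l,
        IntervalIntegrable (fun u => (ε u : ℂ) * f u) MeasureTheory.volume 0 s := by
      intro f hf s hs
      obtain ⟨C, hC⟩ := isCompact_Icc.exists_bound_of_continuousOn hf
      rw [intervalIntegrable_iff, uIoc_of_le hs.1]
      have hfm : AEStronglyMeasurable f (volume.restrict (Ioc (0:ℝ) s)) :=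
        (hf.mono (hsubI s hs)).aestronglyMeasurable measurableSet_Ioc
      refine Integrable.mono' (g := fun _ => ε₂ * C)
        (integrableOn_const measure_Ioc_lt_top.ne)
        (((Complex.measurable_ofReal.comp hmeas).aestronglyMeasurable.restrict).mul hfm) ?_
      refine (ae_restrict_iff' measurableSet_Ioc).2 (Filter.Eventually.of_forall fun u hu => ?_)
      have h1 : ‖(ε u : ℂ)‖ ≤ ε₂ := by simpa using hB u
      have h2 : ‖f u‖ ≤ C := hC u (hsubI s hs hu)
      calc ‖(ε u : ℂ) * f u‖ = ‖(ε u : ℂ)‖ * ‖f u‖ := norm_mul _ _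
        _ ≤ ε₂ * C := mul_le_mul h1 h2 (norm_nonneg _) hε₂0
    -- the two integral equations
    have hint1 : ∀ s ∈ Icc (0:ℝ) l, Ψ z s = ∫ t in (0:ℝ)..s, Ψs z t := by
      intro s hs
      have h := intervalIntegral.integral_eq_sub_of_hasDerivAt (f := Ψ z) (f' := Ψs z)
        (fun t ht => hd1 z t (hsubU s hs ht)) ((hΨsc.mono (hsubU s hs)).intervalIntegrable)
      rw [h, h0 z, sub_zero]
    have hint2 : ∀ s ∈ Icc (0:ℝ) l,
        Ψs z s = 1 - (z^2/(c:ℂ)^2) * ∫ u in (0:ℝ)..s, (ε u : ℂ) * Ψ z u := by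
      intro s hs
      have hii : IntervalIntegrable (fun u => -(z^2/(c:ℂ)^2) * ((ε u : ℂ) * Ψ z u))
          MeasureTheory.volume 0 s := (II2 (Ψ z) hΨc s hs).const_mul _
      have h := intervalIntegral.integral_eq_sub_of_hasDerivAt (f := Ψs z)
        (f' := fun u => -(z^2/(c:ℂ)^2) * ((ε u : ℂ) * Ψ z u))
        (fun t ht => by simpa [mul_assoc] using hd2 z t (hsubU s hs ht)) hii
      rw [h1 z, intervalIntegral.integral_const_mul] at h
      linear_combination -h
    -- partial sums
    set P : ℕ → ℝ → ℂ :=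
      fun N s => ∑ n ∈ Finset.range N, (-(z^2/(c:ℂ)^2))^n * qnPhi ε n s with hPdef
    set Q : ℕ → ℝ → ℂ :=
      fun N s => ∑ n ∈ Finset.range N, (-(z^2/(c:ℂ)^2))^n * qnChi ε n s with hQdef
    have hPcont : ∀ N, Continuous (P N) := by
      intro N
      simp only [hPdef]
      exact continuous_finset_sum _ fun n _ => continuous_const.mul (qnPhi_cont hmeas hB n)
    have hQcont : ∀ N, Continuous (Q N) := by
      intro N
      simp only [hQdef]
      exact continuous_finset_sum _ fun n _ => continuous_const.mul (qnChi_cont hmeas hB n)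
    -- R N s = ∫₀ˢ S N
    have hRint : ∀ N, ∀ s ∈ Icc (0:ℝ) l,
        Ψ z s - P N s = ∫ t in (0:ℝ)..s, (Ψs z t - Q N t) := by
      intro N s hs
      have h1i : IntervalIntegrable (Ψs z) MeasureTheory.volume 0 s :=
        (hΨsc.mono (hsubU s hs)).intervalIntegrable
      have h2i : IntervalIntegrable (Q N) MeasureTheory.volume 0 s :=
        (hQcont N).intervalIntegrable _ _
      rw [intervalIntegral.integral_sub h1i h2i]
      have hPQ : ∫ t in (0:ℝ)..s, Q N t = P N s := by
        simp only [hPdef, hQdef]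
        rw [intervalIntegral.integral_finset_sum
          (fun n _ => show IntervalIntegrable (fun t => (-(z^2/(c:ℂ)^2))^n * qnChi ε n t) volume 0 s
            from (continuous_const.mul (qnChi_cont hmeas hB n)).intervalIntegrable 0 s)]
        refine Finset.sum_congr rfl fun n _ => ?_
        rw [intervalIntegral.integral_const_mul, ← qnPhi_eq_int]
      rw [← hint1 s hs, hPQ]
    -- S (N+1) s = -q ∫₀ˢ ε R N
    have hSrec : ∀ N, ∀ s ∈ Icc (0:ℝ) l,
        Ψs z s - Q (N+1) s
          = -(z^2/(c:ℂ)^2) * ∫ u in (0:ℝ)..s, (ε u : ℂ) * (Ψ z u - P N u) := by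
      intro N s hs
      have hεΨ := II2 (Ψ z) hΨc s hs
      have hεP : IntervalIntegrable (fun u => (ε u : ℂ) * P N u) MeasureTheory.volume 0 s :=
        qn_II hmeas hB (hPcont N) 0 s
      have hsplit : ∫ u in (0:ℝ)..s, (ε u : ℂ) * (Ψ z u - P N u)
          = (∫ u in (0:ℝ)..s, (ε u : ℂ) * Ψ z u) - ∫ u in (0:ℝ)..s, (ε u : ℂ) * P N u := by
        rw [show (fun u => (ε u : ℂ) * (Ψ z u - P N u))
            = fun u => (ε u : ℂ) * Ψ z u - (ε u : ℂ) * P N u from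
          funext fun u => mul_sub _ _ _]
        exact intervalIntegral.integral_sub hεΨ hεP
      have hQs : ∫ u in (0:ℝ)..s, (ε u : ℂ) * P N u
          = ∑ n ∈ Finset.range N, (-(z^2/(c:ℂ)^2))^n * qnChi ε (n+1) s := by
        simp only [hPdef]
        rw [show (fun u => (ε u : ℂ) * ∑ n ∈ Finset.range N, (-(z^2/(c:ℂ)^2))^n * qnPhi ε n u)
            = fun u => ∑ n ∈ Finset.range N,
                (-(z^2/(c:ℂ)^2))^n * ((ε u : ℂ) * qnPhi ε n u) from
          funext fun u => by rw [Finset.mul_sum]; exact Finset.sum_congr rfl fun n _ => by ring]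
        rw [intervalIntegral.integral_finset_sum
          (fun n _ => (qn_II hmeas hB (qnPhi_cont hmeas hB n) 0 s).const_mul _)]
        refine Finset.sum_congr rfl fun n _ => ?_
        rw [intervalIntegral.integral_const_mul]
        rfl
      have hQsplit : Q (N+1) s
          = (∑ n ∈ Finset.range N, (-(z^2/(c:ℂ)^2))^(n+1) * qnChi ε (n+1) s) + 1 := by
        simp only [hQdef]
        rw [Finset.sum_range_succ']
        simp [qnChi]
      have hpow : ∑ n ∈ Finset.range N, (-(z^2/(c:ℂ)^2))^(n+1) * qnChi ε (n+1) s
          = (-(z^2/(c:ℂ)^2)) * ∑ n ∈ Finset.range N, (-(z^2/(c:ℂ)^2))^n * qnChi ε (n+1) s := by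
        rw [Finset.mul_sum]
        exact Finset.sum_congr rfl fun n _ => by ring
      rw [hsplit, hQs, hQsplit, hpow, hint2 s hs]
      ring
    -- the bound, by induction
    obtain ⟨M, hM⟩ := isCompact_Icc.exists_bound_of_continuousOn hΨc
    have hM0 : 0 ≤ M := le_trans (norm_nonneg _) (hM 0 h0Icc)
    set K : ℝ := ‖z^2/(c:ℂ)^2‖ * ε₂ with hKdef
    have hK0 : 0 ≤ K := mul_nonneg (norm_nonneg _) hε₂0
    have hRb : ∀ N, ∀ s ∈ Icc (0:ℝ) l,
        ‖Ψ z s - P N s‖ ≤ M * K^N * s^(2*N) / (2*N).factorial := by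
      intro N
      induction N with
      | zero =>
          intro s hs
          have : P 0 s = 0 := by simp [hPdef]
          rw [this, sub_zero]
          simpa using hM s hs
      | succ N ih =>
          intro s hs
          have hSb : ∀ t ∈ Icc (0:ℝ) l,
              ‖Ψs z t - Q (N+1) t‖ ≤ M * K^(N+1) * t^(2*N+1) / (2*N+1).factorial := by
            intro t ht
            rw [hSrec N t ht, norm_mul, norm_neg]
            have hCnn : (0:ℝ) ≤ ε₂ * (M * K^N / (2*N).factorial) := by positivity
            have h := qn_norm_int_le (f := fun u => (ε u : ℂ) * (Ψ z u - P N u))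
              (C := ε₂ * (M * K^N / (2*N).factorial)) (m := 2*N) ht.1 hCnn ?_
            · refine le_trans (mul_le_mul_of_nonneg_left h (norm_nonneg (z^2/(c:ℂ)^2)))
                (le_of_eq ?_)
              rw [qn_fact_cast (2*N), hKdef]
              push_cast
              field_simp
              ring
            · intro u hu
              have h1 : ‖(ε u : ℂ)‖ ≤ ε₂ := by simpa using hB u
              have h2 := ih u (hsubI t ht hu)
              calc ‖(ε u : ℂ) * (Ψ z u - P N u)‖
                  = ‖(ε u : ℂ)‖ * ‖Ψ z u - P N u‖ := norm_mul _ _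
                _ ≤ ε₂ * (M * K^N * u^(2*N) / (2*N).factorial) :=
                    mul_le_mul h1 h2 (norm_nonneg _) hε₂0
                _ = ε₂ * (M * K^N / (2*N).factorial) * u^(2*N) := by ring
          rw [hRint (N+1) s hs]
          have hCnn : (0:ℝ) ≤ M * K^(N+1) / (2*N+1).factorial := by positivity
          have h := qn_norm_int_le (f := fun t => Ψs z t - Q (N+1) t)
            (C := M * K^(N+1) / (2*N+1).factorial) (m := 2*N+1) hs.1 hCnn ?_
          · refine h.trans (le_of_eq ?_)
            rw [show 2*(N+1) = 2*N+1+1 from by ring, qn_fact_cast (2*N+1)]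
            field_simp
            try ring
            try exact Or.inl trivial
          · intro t ht
            refine (hSb t (hsubI s hs ht)).trans (le_of_eq ?_)
            ring
    -- convergence of the partial sums at s = l
    have hx1 : (1:ℝ) ≤ K*l^2+1 := by nlinarith
    have hmono : ∀ N : ℕ, K^N * l^(2*N) ≤ (K*l^2+1)^(2*N) := by
      intro N
      have h1 : K^N * l^(2*N) = (K*l^2)^N := by rw [mul_pow, pow_mul]; ring
      rw [h1, pow_mul]
      refine pow_le_pow_left₀ (by positivity) ?_ N
      nlinarith
    have hzero : ∀ D : ℝ, 0 ≤ D →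
        Filter.Tendsto (fun N : ℕ => D * (K*l^2+1)^(2*N) / (2*N).factorial)
          Filter.atTop (𝓝 0) := by
      intro D hD
      have h1 : Filter.Tendsto (fun m : ℕ => D * ((K*l^2+1)^m / m.factorial))
          Filter.atTop (𝓝 (D * 0)) :=
        ((Real.summable_pow_div_factorial (K*l^2+1)).tendsto_atTop_zero).const_mul D
      rw [mul_zero] at h1
      have h2 : Filter.Tendsto (fun N : ℕ => 2*N) Filter.atTop Filter.atTop :=
        Filter.tendsto_atTop_mono (f := id) (fun n => by simp only [id_eq]; omega) Filter.tendsto_id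
      have := h1.comp h2
      simpa [Function.comp_def, mul_div_assoc] using this
    have hPl : Filter.Tendsto (fun N => P N l) Filter.atTop (𝓝 (Ψ z l)) := by
      rw [← tendsto_sub_nhds_zero_iff]
      refine squeeze_zero_norm (a := fun N => M * (K*l^2+1)^(2*N) / (2*N).factorial)
        (fun N => ?_) (hzero M hM0)
      rw [norm_sub_rev]
      refine (hRb N l ⟨hl.le, le_refl l⟩).trans ?_
      rw [div_le_div_iff_of_pos_right (hfacpos _)]
      calc M * K^N * l^(2*N) = M * (K^N * l^(2*N)) := by ring
        _ ≤ M * (K*l^2+1)^(2*N) := mul_le_mul_of_nonneg_left (hmono N) hM0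
    have hQl : Filter.Tendsto (fun N => Q N l) Filter.atTop (𝓝 (Ψs z l)) := by
      rw [← Filter.tendsto_add_atTop_iff_nat 1, ← tendsto_sub_nhds_zero_iff]
      refine squeeze_zero_norm (a := fun N => (M*K*l) * (K*l^2+1)^(2*N) / (2*N).factorial)
        (fun N => ?_) (hzero (M*K*l) (by positivity))
      rw [norm_sub_rev]
      have hSb : ‖Ψs z l - Q (N+1) l‖ ≤ M * K^(N+1) * l^(2*N+1) / (2*N+1).factorial := by
        -- reprove the S-bound at l from hRb, as in the induction step
        rw [hSrec N l ⟨hl.le, le_refl l⟩, norm_mul, norm_neg]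
        have hCnn : (0:ℝ) ≤ ε₂ * (M * K^N / (2*N).factorial) := by positivity
        have h := qn_norm_int_le (f := fun u => (ε u : ℂ) * (Ψ z u - P N u))
          (C := ε₂ * (M * K^N / (2*N).factorial)) (m := 2*N) hl.le hCnn ?_
        · refine le_trans (mul_le_mul_of_nonneg_left h (norm_nonneg (z^2/(c:ℂ)^2)))
            (le_of_eq ?_)
          rw [qn_fact_cast (2*N), hKdef]
          push_cast
          field_simp
          ring
        · intro u hu
          have h1 : ‖(ε u : ℂ)‖ ≤ ε₂ := by simpa using hB u
          have h2 := hRb N u (hsubI l ⟨hl.le, le_refl l⟩ hu)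
          calc ‖(ε u : ℂ) * (Ψ z u - P N u)‖
              = ‖(ε u : ℂ)‖ * ‖Ψ z u - P N u‖ := norm_mul _ _
            _ ≤ ε₂ * (M * K^N * u^(2*N) / (2*N).factorial) :=
                mul_le_mul h1 h2 (norm_nonneg _) hε₂0
            _ = ε₂ * (M * K^N / (2*N).factorial) * u^(2*N) := by ring
      refine hSb.trans ?_
      have hden : ((2*N).factorial : ℝ) ≤ ((2*N+1).factorial : ℝ) := by
        exact_mod_cast Nat.factorial_le (by omega)
      calc M * K^(N+1) * l^(2*N+1) / (2*N+1).factorial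
          ≤ M * K^(N+1) * l^(2*N+1) / (2*N).factorial :=
            div_le_div_of_nonneg_left (by positivity) (hfacpos _) hden
        _ = (M*K*l) * (K^N * l^(2*N)) / (2*N).factorial := by ring
        _ ≤ (M*K*l) * (K*l^2+1)^(2*N) / (2*N).factorial := by
            rw [div_le_div_iff_of_pos_right (hfacpos _)]
            exact mul_le_mul_of_nonneg_left (hmono N) (by positivity)
    -- identify the limits with the entire functions
    have hPa : ∀ N, P N l = ∑ n ∈ Finset.range N, a n * (z^2)^n := by
      intro N
      simp only [hPdef, ha]
      refine Finset.sum_congr rfl fun n _ => ?_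
      rw [show (-(z^2/(c:ℂ)^2)) = (-1/(c:ℂ)^2) * z^2 from by ring, mul_pow]
      ring
    have hQb : ∀ N, Q N l = ∑ n ∈ Finset.range N, b n * (z^2)^n := by
      intro N
      simp only [hQdef, hbdef]
      refine Finset.sum_congr rfl fun n _ => ?_
      rw [show (-(z^2/(c:ℂ)^2)) = (-1/(c:ℂ)^2) * z^2 from by ring, mul_pow]
      ring
    constructor
    · have h2 := hGaT (z^2)
      rw [show (fun N => ∑ n ∈ Finset.range N, a n * (z^2)^n) = fun N => P N l from
        funext fun N => (hPa N).symm] at h2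
      exact tendsto_nhds_unique hPl h2
    · have h2 := hGbT (z^2)
      rw [show (fun N => ∑ n ∈ Finset.range N, b n * (z^2)^n) = fun N => Q N l from
        funext fun N => (hQb N).symm] at h2
      exact tendsto_nhds_unique hQl h2
  -- the entire function equal to F
  set G : ℂ → ℂ := fun w =>
    Complex.I * w * ((Real.sqrt εoo / c : ℝ) : ℂ) * Ga (w^2) - Gb (w^2) with hGdef
  have hFG : ∀ w, F w = G w := by
    intro w
    rw [hF w, (hrep w).1, (hrep w).2]
  have hG0 : G 0 = -1 := by
    simp only [hGdef]
    simp only [ne_eq, OfNat.ofNat_ne_zero, not_false_eq_true, zero_pow, mul_zero, zero_mul]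
    rw [hGb0, hbdef]
    simp [qnChi]
  have hGanal : ∀ w, AnalyticAt ℂ G w := by
    intro w
    simp only [hGdef]
    have hsq : AnalyticAt ℂ (fun w : ℂ => w^2) w := analyticAt_id.pow 2
    have h1 : AnalyticAt ℂ (fun w => Ga (w^2)) w :=
      AnalyticAt.comp (f := fun w : ℂ => w^2) (x := w) (hGaA (w^2)) hsq
    have h2 : AnalyticAt ℂ (fun w => Gb (w^2)) w :=
      AnalyticAt.comp (f := fun w : ℂ => w^2) (x := w) (hGbA (w^2)) hsq
    exact (((analyticAt_const.mul analyticAt_id).mul analyticAt_const).mul h1).sub h2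
  constructor
  · refine ⟨0, ?_⟩
    rw [hFG 0, hG0]
    simp
  · intro ω hω
    rcases (hGanal ω).eventually_eq_zero_or_eventually_ne_zero with h | h
    · exfalso
      have hOn : AnalyticOnNhd ℂ G univ := fun x _ => hGanal x
      have hall : EqOn G 0 univ :=
        hOn.eqOn_zero_of_preconnected_of_eventuallyEq_zero isPreconnected_univ (mem_univ ω) h
      have := hall (mem_univ (0:ℂ))
      rw [hG0] at this
      simpa using this
    · rw [Filter.eventually_iff, Metric.mem_nhdsWithin_iff] at h
      obtain ⟨δ, hδ, hball⟩ := h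
      refine ⟨δ, hδ, fun w hw hwd => ?_⟩
      by_contra hne
      have hmem : w ∈ Metric.ball ω δ ∩ {ω}ᶜ := by
        constructor
        · rw [Metric.mem_ball, Complex.dist_eq]
          exact hwd
        · simpa using hne
      have := hball hmem
      rw [Set.mem_setOf_eq] at this
      rw [hFG w] at hw
      exact this hw
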